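/- Let G=(V,E) be a finite undirected graph. There exists an optimal half-integral solution x ∈ {0, 1/2, 1}^V to the LP relaxation of Independent Set on G (maximize Σ x_v subject to x_u + x_v ≤ 1 for every edge {u,v} and 0 ≤ x_v ≤ 1) such that for every maximum independent set I of G it holds that V_1^x ⊆ I ⊆ V \ V_0^x, where V_i^x = {v ∈ V : x_v = i}. -/

import Mathlib

attribute [local instance] Classical.propDecidable

namespace VCKernel

variable {V : Type*} [Fintype V] [DecidableEq V]

/-- `S` is an independent set of `G`. -/
def IsIndep (G : SimpleGraph V) (S : Finset V) : Prop :=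
  ∀ u ∈ S, ∀ v ∈ S, ¬ G.Adj u v

/-- Independence number of the subgraph of `G` induced on the vertex set `A`. -/
noncomputable def alphaOn (G : SimpleGraph V) (A : Set V) : ℕ :=
  sSup {n | ∃ S : Finset V, ↑S ⊆ A ∧ IsIndep G S ∧ S.card = n}

/-- Independence number `α(G)`. -/
noncomputable def alpha (G : SimpleGraph V) : ℕ := alphaOn G Set.univ

/-- `Y` is a blocking set: deleting it decreases the independence number. -/
def IsBlocking (G : SimpleGraph V) (Y : Finset V) : Prop :=
  alphaOn G (Set.univ \ ↑Y) < alpha G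

/-- `Y` is a minimal blocking set. -/
def IsMinBlocking (G : SimpleGraph V) (Y : Finset V) : Prop :=
  IsBlocking G Y ∧ ∀ Y' ⊂ Y, ¬ IsBlocking G Y'

/-- Open neighborhood of the vertex set `X'` in `G`. -/
def nbhd (G : SimpleGraph V) (X' : Finset V) : Set V :=
  {v | ∃ u ∈ X', G.Adj u v}

/-- Number of conflicts induced by `X'` on the induced subgraph with vertex set `A`. -/
noncomputable def conf (G : SimpleGraph V) (A : Set V) (X' : Finset V) : ℕ :=
  alphaOn G A - alphaOn G (A \ nbhd G X')

/-- `C` is (the vertex set of) a connected component of the subgraph of `G`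
induced on `A`. -/
def IsCompOf (G : SimpleGraph V) (A C : Set V) : Prop :=
  C ⊆ A ∧ (G.induce C).Connected ∧ ∀ u ∈ C, ∀ v ∈ A, G.Adj u v → v ∈ C

/-- Feasible solution to the Independent Set LP of the subgraph induced on `A`. -/
def FeasISOn (G : SimpleGraph V) (A : Set V) (x : V → ℝ) : Prop :=
  (∀ v ∈ A, 0 ≤ x v ∧ x v ≤ 1) ∧
    ∀ u ∈ A, ∀ v ∈ A, G.Adj u v → x u + x v ≤ 1

/-- Half-integrality on `A`. -/
def HalfIntOn (A : Set V) (x : V → ℝ) : Prop :=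
  ∀ v ∈ A, x v = 0 ∨ x v = 1/2 ∨ x v = 1

/-- Objective value of an LP solution on vertex set `A`. -/
noncomputable def weightOn (A : Set V) (x : V → ℝ) : ℝ :=
  ∑ v, if v ∈ A then x v else 0

/-- `x` is an optimum half-integral solution to the Independent Set LP
of the subgraph induced on `A`. -/
def OptHIOn (G : SimpleGraph V) (A : Set V) (x : V → ℝ) : Prop :=
  FeasISOn G A x ∧ HalfIntOn A x ∧
    ∀ y : V → ℝ, FeasISOn G A y → HalfIntOn A y → weightOn A y ≤ weightOn A x

/-- Feasible solution to the Vertex Cover LP of `G`. -/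
def FeasVC (G : SimpleGraph V) (x : V → ℝ) : Prop :=
  (∀ v, 0 ≤ x v ∧ x v ≤ 1) ∧ ∀ u v, G.Adj u v → 1 ≤ x u + x v

/-- Optimum value of the Independent Set LP of `G`. -/
noncomputable def lpIS (G : SimpleGraph V) : ℝ :=
  sSup {w | ∃ x : V → ℝ, FeasISOn G Set.univ x ∧ w = ∑ v, x v}

/-- Optimum value of the Vertex Cover LP of `G`. -/
noncomputable def lpVC (G : SimpleGraph V) : ℝ :=
  sInf {w | ∃ x : V → ℝ, FeasVC G x ∧ w = ∑ v, x v}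

/-- `C` is a vertex cover of `G`. -/
def IsVC (G : SimpleGraph V) (C : Finset V) : Prop :=
  ∀ u v, G.Adj u v → u ∈ C ∨ v ∈ C

/-- Vertex cover number of `G`. -/
noncomputable def vcNum (G : SimpleGraph V) : ℕ :=
  sInf {n | ∃ C : Finset V, IsVC G C ∧ C.card = n}

/-- `Z` is a feedback vertex set of `G`. -/
def IsFVS (G : SimpleGraph V) (Z : Finset V) : Prop :=
  (G.induce ((↑Z : Set V)ᶜ)).IsAcyclic

/-- `Z` is an odd cycle transversal of `G`. -/
def IsOCT (G : SimpleGraph V) (Z : Finset V) : Prop :=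
  (G.induce ((↑Z : Set V)ᶜ)).Colorable 2

/-- `G` is a `d`-quasi-forest: each connected component has a feedback
vertex set of size at most `d`. -/
def QuasiForest (G : SimpleGraph V) (d : ℕ) : Prop :=
  ∀ C : Set V, IsCompOf G Set.univ C →
    ∃ Z : Finset V, Z.card ≤ d ∧ (G.induce (C \ ↑Z)).IsAcyclic

/-- `G` is `d`-quasi-bipartite: each connected component has an odd cycle
transversal of size at most `d`. -/
def QuasiBipartite (G : SimpleGraph V) (d : ℕ) : Prop :=
  ∀ C : Set V, IsCompOf G Set.univ C →
    ∃ Z : Finset V, Z.card ≤ d ∧ (G.induce (C \ ↑Z)).Colorable 2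

/-- Feedback vertex set number of `G`. -/
noncomputable def fvsNum (G : SimpleGraph V) : ℕ :=
  sInf {n | ∃ Z : Finset V, IsFVS G Z ∧ Z.card = n}

/-- Odd cycle transversal number of `G`. -/
noncomputable def octNum (G : SimpleGraph V) : ℕ :=
  sInf {n | ∃ Z : Finset V, IsOCT G Z ∧ Z.card = n}

/-- The subgraph of `G` induced on `A` has treedepth at most `k`
(elimination-forest characterization of treedepth). -/
def tdLE (G : SimpleGraph V) : ℕ → Set V → Prop
  | 0, A => A = ∅
  | (k+1), A => ∀ C : Set V, IsCompOf G A C → ∃ v ∈ C, tdLE G k (C \ {v})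

/-- There exists an optimum half-integral LP(IS) solution `x` such that every
maximum independent set `I` satisfies `V_1^x ⊆ I ⊆ V \ V_0^x`. -/

lemma card_le_alpha (G : SimpleGraph V) {S : Finset V} (h : IsIndep G S) :
    S.card ≤ alpha G := by
  apply le_csSup
  · refine ⟨Fintype.card V, ?_⟩
    rintro n ⟨S', -, -, rfl⟩
    exact S'.card_le_univ
  · exact ⟨S, by simp, h, rfl⟩

theorem stmt0 (G : SimpleGraph V) :
    ∃ x : V → ℝ, OptHIOn G Set.univ x ∧
      ∀ I : Finset V, IsIndep G I → I.card = alpha G →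
        {v | x v = 1} ⊆ (↑I : Set V) ∧ (↑I : Set V) ⊆ {v | x v ≠ 0} := by
  classical
  -- the finite set of all {0,1/2,1}-valued functions
  set T : Finset (V → ℝ) :=
    (Finset.univ : Finset (V → Fin 3)).image (fun g v => ((g v : ℕ) : ℝ) / 2) with hT
  have hmemT : ∀ f : V → ℝ, (∀ v, f v = 0 ∨ f v = 1/2 ∨ f v = 1) → f ∈ T := by
    intro f hf
    refine Finset.mem_image.2
      ⟨fun v => if f v = 0 then 0 else if f v = 1/2 then 1 else 2, Finset.mem_univ _, ?_⟩
    funext v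
    have h2 : ((2 : Fin 3) : ℕ) = 2 := rfl
    rcases hf v with h | h | h <;> norm_num [h, h2]
  have hThalf : ∀ f ∈ T, ∀ v, f v = 0 ∨ f v = 1/2 ∨ f v = 1 := by
    intro f hf v
    obtain ⟨g, -, rfl⟩ := Finset.mem_image.1 hf
    have h3 : (g v : ℕ) < 3 := (g v).isLt
    interval_cases h : (g v : ℕ) <;> simp [h]
  -- feasible half-integral solutions
  set S : Finset (V → ℝ) := T.filter (fun f => FeasISOn G Set.univ f) with hS
  have hSne : S.Nonempty := by
    refine ⟨fun _ => 0, Finset.mem_filter.2 ⟨hmemT _ (fun v => Or.inl rfl), ?_⟩⟩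
    constructor
    · intro v _; norm_num
    · intro u _ v _ _; norm_num
  -- the lexicographic key: (weight, number of half coordinates)
  set key : (V → ℝ) → ℝ ×ₗ ℕ := fun f =>
    toLex (weightOn Set.univ f, (Finset.univ.filter (fun v => f v = 1/2)).card) with hkeydef
  obtain ⟨x, hxS, hxmax⟩ := S.exists_max_image key hSne
  have hxT : x ∈ T := (Finset.mem_filter.1 hxS).1
  have hxfeas : FeasISOn G Set.univ x := (Finset.mem_filter.1 hxS).2
  have hxhalf : ∀ v, x v = 0 ∨ x v = 1/2 ∨ x v = 1 := hThalf x hxT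
  have hwOn : ∀ f : V → ℝ, weightOn (Set.univ : Set V) f = ∑ v, f v := by
    intro f; unfold weightOn; simp
  have hmemS : ∀ f : V → ℝ, FeasISOn G Set.univ f → (∀ v, f v = 0 ∨ f v = 1/2 ∨ f v = 1) →
      f ∈ S := fun f hfe hh => Finset.mem_filter.2 ⟨hmemT f hh, hfe⟩
  refine ⟨x, ⟨hxfeas, fun v _ => hxhalf v, ?_⟩, ?_⟩
  · -- optimality among half-integral feasible solutions
    intro y hyfeas hyhalf
    have hy : y ∈ S := hmemS y hyfeas (fun v => hyhalf v (Set.mem_univ v))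
    have := hxmax y hy
    rw [hkeydef] at this
    rcases Prod.Lex.toLex_le_toLex |>.1 this with h | h
    · exact le_of_lt h
    · exact le_of_eq h.1
  · -- strong persistency
    intro I hInd hIcard
    set V1 : Finset V := Finset.univ.filter (fun v => x v = 1) with hV1
    set A : Finset V := V1 \ I with hA
    set B : Finset V := I.filter (fun v => x v = 0) with hB
    have hAx : ∀ v ∈ A, x v = 1 := by
      intro v hv
      exact (Finset.mem_filter.1 (Finset.mem_sdiff.1 hv).1).2
    have hAnI : ∀ v ∈ A, v ∉ I := fun v hv => (Finset.mem_sdiff.1 hv).2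
    have hBx : ∀ v ∈ B, x v = 0 := fun v hv => (Finset.mem_filter.1 hv).2
    have hBI : B ⊆ I := fun v hv => (Finset.mem_filter.1 hv).1
    have hdisj : Disjoint A B := by
      rw [Finset.disjoint_left]
      intro v hvA hvB
      have := hAx v hvA
      have := hBx v hvB
      linarith
    -- Step 1 : |A| ≤ |B| via the swapped independent set
    have hstep1 : A.card ≤ B.card := by
      set I' : Finset V := (I \ B) ∪ V1 with hI'
      have hIge : ∀ v ∈ I \ B, (1:ℝ)/2 ≤ x v := by
        intro v hv
        obtain ⟨hvI, hvB⟩ := Finset.mem_sdiff.1 hv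
        rcases hxhalf v with h | h | h
        · exact absurd (Finset.mem_filter.2 ⟨hvI, h⟩) hvB
        · rw [h]
        · rw [h]; norm_num
      have hI'ind : IsIndep G I' := by
        intro u hu v hv hadj
        have hedge := hxfeas.2 u (Set.mem_univ u) v (Set.mem_univ v) hadj
        rcases Finset.mem_union.1 hu with hu' | hu' <;>
          rcases Finset.mem_union.1 hv with hv' | hv'
        · exact hInd u (Finset.mem_sdiff.1 hu').1 v (Finset.mem_sdiff.1 hv').1 hadj
        · have h1 := hIge u hu'
          have h2 := (Finset.mem_filter.1 hv').2
          linarith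
        · have h1 := (Finset.mem_filter.1 hu').2
          have h2 := hIge v hv'
          linarith
        · have h1 := (Finset.mem_filter.1 hu').2
          have h2 := (Finset.mem_filter.1 hv').2
          linarith
      have hsub : I ∪ A ⊆ I' ∪ B := by
        intro v hv
        rcases Finset.mem_union.1 hv with hv' | hv'
        · by_cases hvB : v ∈ B
          · exact Finset.mem_union.2 (Or.inr hvB)
          · exact Finset.mem_union.2 (Or.inl (Finset.mem_union.2 (Or.inl
              (Finset.mem_sdiff.2 ⟨hv', hvB⟩))))
        · exact Finset.mem_union.2 (Or.inl (Finset.mem_union.2 (Or.inr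
            (Finset.mem_sdiff.1 hv').1)))
      have hdisjIA : Disjoint I A := by
        rw [Finset.disjoint_right]
        exact fun v hv => hAnI v hv
      have h1 : I.card + A.card = (I ∪ A).card := (Finset.card_union_of_disjoint hdisjIA).symm
      have h2 : (I ∪ A).card ≤ (I' ∪ B).card := Finset.card_le_card hsub
      have h3 : (I' ∪ B).card ≤ I'.card + B.card := Finset.card_union_le _ _
      have h4 : I'.card ≤ I.card := by
        calc I'.card ≤ alpha G := card_le_alpha G hI'ind
        _ = I.card := hIcard.symm
      omega
    -- the perturbed solution
    set x' : V → ℝ := fun v => if v ∈ A ∪ B then 1/2 else x v with hx'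
    have hx'in : ∀ v ∈ A ∪ B, x' v = 1/2 := fun v hv => by
      show (if v ∈ A ∪ B then (1:ℝ)/2 else x v) = 1/2
      rw [if_pos hv]
    have hx'out : ∀ v, v ∉ A ∪ B → x' v = x v := fun v hv => by
      show (if v ∈ A ∪ B then (1:ℝ)/2 else x v) = x v
      rw [if_neg hv]
    have hx'half : ∀ v, x' v = 0 ∨ x' v = 1/2 ∨ x' v = 1 := by
      intro v
      by_cases h : v ∈ A ∪ B
      · exact Or.inr (Or.inl (hx'in v h))
      · rw [hx'out v h]; exact hxhalf v
    have hkey2 : ∀ u v, G.Adj u v → u ∈ A ∪ B → v ∉ A ∪ B → x v ≤ 1/2 := by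
      intro u v hadj hu hv
      rcases hxhalf v with h | h | h
      · rw [h]; norm_num
      · rw [h]
      · exfalso
        have hvV1 : v ∈ V1 := Finset.mem_filter.2 ⟨Finset.mem_univ v, h⟩
        have hvI : v ∈ I := by
          by_contra hvI
          exact hv (Finset.mem_union.2 (Or.inl (Finset.mem_sdiff.2 ⟨hvV1, hvI⟩)))
        rcases Finset.mem_union.1 hu with hu' | hu'
        · have := hAx u hu'
          have hedge := hxfeas.2 u (Set.mem_univ u) v (Set.mem_univ v) hadj
          linarith
        · exact hInd u (hBI hu') v hvI hadj
    have hx'feas : FeasISOn G Set.univ x' := by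
      constructor
      · intro v _
        rcases hx'half v with h | h | h <;> rw [h] <;> norm_num
      · intro u _ v _ hadj
        by_cases hu : u ∈ A ∪ B <;> by_cases hv : v ∈ A ∪ B
        · rw [hx'in u hu, hx'in v hv]; norm_num
        · rw [hx'in u hu, hx'out v hv]
          have := hkey2 u v hadj hu hv; linarith
        · rw [hx'out u hu, hx'in v hv]
          have := hkey2 v u hadj.symm hv hu; linarith
        · rw [hx'out u hu, hx'out v hv]
          exact hxfeas.2 u (Set.mem_univ u) v (Set.mem_univ v) hadj
    have hx'S : x' ∈ S := hmemS x' hx'feas hx'half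
    -- weight of x'
    have hwdiff : weightOn Set.univ x' =
        weightOn Set.univ x + (B.card : ℝ)/2 - (A.card : ℝ)/2 := by
      rw [hwOn, hwOn]
      have hsum : ∑ v, x' v - ∑ v, x v = ∑ v ∈ A ∪ B, ((1:ℝ)/2 - x v) := by
        rw [← Finset.sum_sub_distrib]
        rw [show ∑ v ∈ A ∪ B, ((1:ℝ)/2 - x v) = ∑ v, if v ∈ A ∪ B then ((1:ℝ)/2 - x v) else 0 by
          rw [← Finset.sum_filter]
          congr 1
          rw [Finset.filter_mem_eq_inter, Finset.univ_inter]]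
        refine Finset.sum_congr rfl ?_
        intro v _
        show x' v - x v = if v ∈ A ∪ B then (1:ℝ)/2 - x v else 0
        by_cases h : v ∈ A ∪ B
        · rw [if_pos h, hx'in v h]
        · rw [if_neg h, hx'out v h, sub_self]
      have hsA : ∑ v ∈ A, ((1:ℝ)/2 - x v) = -(A.card : ℝ)/2 := by
        rw [Finset.sum_congr rfl (fun v hv => by rw [hAx v hv])]
        simp; ring
      have hsB : ∑ v ∈ B, ((1:ℝ)/2 - x v) = (B.card : ℝ)/2 := by
        rw [Finset.sum_congr rfl (fun v hv => by rw [hBx v hv])]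
        simp; ring
      rw [Finset.sum_union hdisj, hsA, hsB] at hsum
      linarith
    -- use lex-maximality on x'
    have hle := hxmax x' hx'S
    rw [hkeydef] at hle
    rcases Prod.Lex.toLex_le_toLex |>.1 hle with hlt | ⟨heq, hhle⟩
    · exfalso
      simp only at hlt
      rw [hwdiff] at hlt
      have : (B.card : ℝ) < (A.card : ℝ) := by linarith
      have : B.card < A.card := by exact_mod_cast this
      omega
    · -- equal weight: A ∪ B must be empty, else strictly more halves
      have hABempty : A ∪ B = ∅ := by
        by_contra hne
        obtain ⟨w, hw⟩ := Finset.nonempty_iff_ne_empty.2 hne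
        have hssub : Finset.univ.filter (fun v => x v = 1/2) ⊂
            Finset.univ.filter (fun v => x' v = 1/2) := by
          rw [Finset.ssubset_iff_of_subset]
          · refine ⟨w, Finset.mem_filter.2 ⟨Finset.mem_univ w, hx'in w hw⟩, ?_⟩
            intro hcon
            have hxw := (Finset.mem_filter.1 hcon).2
            rcases Finset.mem_union.1 hw with hw' | hw'
            · have := hAx w hw'; rw [hxw] at this; norm_num at this
            · have := hBx w hw'; rw [hxw] at this; norm_num at this
          · intro v hv
            have hxv := (Finset.mem_filter.1 hv).2
            have hvAB : v ∉ A ∪ B := by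
              intro hcon
              rcases Finset.mem_union.1 hcon with h' | h'
              · have := hAx v h'; rw [hxv] at this; norm_num at this
              · have := hBx v h'; rw [hxv] at this; norm_num at this
            exact Finset.mem_filter.2 ⟨Finset.mem_univ v, by rw [hx'out v hvAB, hxv]⟩
        exact absurd hhle (not_le.2 (Finset.card_lt_card hssub))
      have hAe : A = ∅ := by
        have := Finset.union_eq_empty.1 hABempty
        exact this.1
      have hBe : B = ∅ := (Finset.union_eq_empty.1 hABempty).2
      constructor
      · intro v hv
        simp only [Set.mem_setOf_eq] at hv
        by_contra hvI
        have : v ∈ A := Finset.mem_sdiff.2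
          ⟨Finset.mem_filter.2 ⟨Finset.mem_univ v, hv⟩, by simpa using hvI⟩
        rw [hAe] at this
        exact absurd this (Finset.notMem_empty v)
      · intro v hv hx0
        have : v ∈ B := Finset.mem_filter.2 ⟨by simpa using hv, hx0⟩
        rw [hBe] at this
        exact absurd this (Finset.notMem_empty v)

end VCKernel
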